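/- arXiv:0903.2713 — 3 statements merged into one kernel-verified Lean document; each statement's English description precedes it below -/
import Mathlib

section
/- Let T > 0, p ≥ 0, and let f : [0,T] → [0,∞) be a C¹ function. Suppose there exist constants c₁ > 0 and c₂ ≥ 0 such that f'(t) ≤ -c₁ f(t)/(1+t)^p + c₂ √(f(t)) for all t ∈ [0,T]. Then f(t) ≤ f(0) + (c₂/c₁)² (1+t)^{2p} for all t ∈ [0,T]. -/
open Real Set

theorem ode_comparison_lemma
    (T p c₁ c₂ : ℝ) (hT : 0 < T) (hp : 0 ≤ p) (hc₁ : 0 < c₁) (hc₂ : 0 ≤ c₂)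
    (f f' : ℝ → ℝ)
    (hf_nonneg : ∀ t ∈ Icc (0:ℝ) T, 0 ≤ f t)
    (hf_deriv : ∀ t ∈ Icc (0:ℝ) T, HasDerivAt f (f' t) t)
    (hf'_cont : ContinuousOn f' (Icc (0:ℝ) T))
    (hineq : ∀ t ∈ Icc (0:ℝ) T,
      f' t ≤ -c₁ / (1 + t) ^ p * f t + c₂ * Real.sqrt (f t)) :
    ∀ t ∈ Icc (0:ℝ) T, f t ≤ f 0 + (c₂ / c₁) ^ 2 * (1 + t) ^ (2 * p) := by
  intro t ht
  have h1t : (0:ℝ) < 1 + t := by linarith [ht.1]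
  have hf0 : 0 ≤ f 0 := hf_nonneg 0 ⟨le_refl 0, hT.le⟩
  have key : ∀ ε > 0, f t ≤ f 0 + (c₂ / c₁) ^ 2 * (1 + t) ^ (2 * p) + ε * (1 + t) := by
    intro ε hε
    set B : ℝ → ℝ := fun s => f 0 + (c₂ / c₁) ^ 2 * (1 + s) ^ (2 * p) + ε * (1 + s) with hB
    set B' : ℝ → ℝ := fun s => (c₂ / c₁) ^ 2 * (2 * p * (1 + s) ^ (2 * p - 1)) + ε with hBd
    have hBderiv : ∀ s ∈ Ico (0:ℝ) T, HasDerivAt B (B' s) s := by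
      intro s hs
      have h1s : (0:ℝ) < 1 + s := by linarith [hs.1]
      have h := HasDerivAt.rpow_const (p := 2 * p) ((hasDerivAt_id s).const_add 1)
        (Or.inl (show (1 : ℝ) + id s ≠ 0 by simpa using h1s.ne'))
      simp only [id_eq, one_mul] at h
      have h2 : HasDerivAt B ((c₂ / c₁) ^ 2 * (2 * p * (1 + s) ^ (2 * p - 1)) + ε * 1) s :=
        ((h.const_mul ((c₂ / c₁) ^ 2)).const_add (f 0)).add
          (((hasDerivAt_id s).const_add 1).const_mul ε)
      convert h2 using 1
      simp [hBd]
    have hfa : f 0 ≤ B 0 := by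
      have : (0:ℝ) < (1 + (0:ℝ)) ^ (2 * p) := Real.rpow_pos_of_pos (by norm_num) _
      have h2 : 0 ≤ (c₂ / c₁) ^ 2 := sq_nonneg _
      simp only [hB]
      norm_num
      nlinarith [mul_nonneg h2 this.le]
    have bound : ∀ x ∈ Ico (0:ℝ) T, f x = B x → f' x < B' x := by
      intro x hx hfxB
      have hxI : x ∈ Icc (0:ℝ) T := ⟨hx.1, hx.2.le⟩
      have h1x : (0:ℝ) < 1 + x := by linarith [hx.1]
      have hpowp : (0:ℝ) < (1 + x) ^ p := Real.rpow_pos_of_pos h1x _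
      have hsq : (1 + x) ^ (2 * p) = ((1 + x) ^ p) ^ 2 := by
        rw [← Real.rpow_natCast ((1 + x) ^ p) 2, ← Real.rpow_mul h1x.le]
        norm_num; ring_nf
      have hfge : (c₂ / c₁) ^ 2 * (1 + x) ^ (2 * p) ≤ f x := by
        rw [hfxB]
        simp only [hB]
        nlinarith
      have hsqrt : c₂ / c₁ * (1 + x) ^ p ≤ Real.sqrt (f x) := by
        have : Real.sqrt ((c₂ / c₁) ^ 2 * (1 + x) ^ (2 * p)) = c₂ / c₁ * (1 + x) ^ p := by
          rw [hsq, ← mul_pow, Real.sqrt_sq (by positivity)]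
        rw [← this]
        exact Real.sqrt_le_sqrt hfge
      have hfx : 0 ≤ f x := hf_nonneg x hxI
      have hs2 : Real.sqrt (f x) ^ 2 = f x := Real.sq_sqrt hfx
      have hsnn : 0 ≤ Real.sqrt (f x) := Real.sqrt_nonneg _
      have hmain : f' x ≤ 0 := by
        have h := hineq x hxI
        have h2 : c₂ * Real.sqrt (f x) ≤ c₁ / (1 + x) ^ p * f x := by
          have hc2le : c₂ * (1 + x) ^ p ≤ c₁ * Real.sqrt (f x) := by
            have := mul_le_mul_of_nonneg_left hsqrt hc₁.le
            calc c₂ * (1 + x) ^ p = c₁ * (c₂ / c₁ * (1 + x) ^ p) := by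
                  field_simp
              _ ≤ c₁ * Real.sqrt (f x) := this
          rw [div_mul_eq_mul_div, le_div_iff₀ hpowp]
          have h3 := mul_le_mul_of_nonneg_right hc2le hsnn
          calc c₂ * Real.sqrt (f x) * (1 + x) ^ p
              = c₂ * (1 + x) ^ p * Real.sqrt (f x) := by ring
            _ ≤ c₁ * Real.sqrt (f x) * Real.sqrt (f x) := by linarith
            _ = c₁ * Real.sqrt (f x) ^ 2 := by ring
            _ = c₁ * f x := by rw [hs2]
        have : -c₁ / (1 + x) ^ p * f x = -(c₁ / (1 + x) ^ p * f x) := by ring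
        linarith [this ▸ h]
      have hBpos : 0 < B' x := by
        have h1 : (0:ℝ) < (1 + x) ^ (2 * p - 1) := Real.rpow_pos_of_pos h1x _
        have h2 : 0 ≤ (c₂ / c₁) ^ 2 := sq_nonneg _
        simp only [hBd]
        nlinarith [mul_nonneg h2 (mul_nonneg (by linarith : (0:ℝ) ≤ 2 * p) h1.le)]
      linarith
    have hcf : ContinuousOn f (Icc (0:ℝ) T) := fun x hx =>
      (hf_deriv x hx).continuousAt.continuousWithinAt
    have hcB : ContinuousOn B (Icc (0:ℝ) T) := by
      apply ContinuousOn.add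
      apply ContinuousOn.add continuousOn_const
      · apply continuousOn_const.mul
        apply ContinuousOn.rpow_const (by fun_prop)
        intro x hx
        exact Or.inl (by intro h; linarith [hx.1])
      · fun_prop
    exact image_le_of_deriv_right_lt_deriv_boundary' hcf
      (fun x hx => (hf_deriv x ⟨hx.1, hx.2.le⟩).hasDerivWithinAt)
      hfa hcB (fun x hx => (hBderiv x hx).hasDerivWithinAt) bound ht
  refine le_of_forall_pos_le_add fun ε hε => ?_
  have h := key (ε / (1 + t)) (by positivity)
  calc f t ≤ f 0 + (c₂ / c₁) ^ 2 * (1 + t) ^ (2 * p) + ε / (1 + t) * (1 + t) := h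
    _ = f 0 + (c₂ / c₁) ^ 2 * (1 + t) ^ (2 * p) + ε := by field_simp
end

section
/- Let p ≥ 0, γ > 0, α > 0, T > 0, let w : [0,T] → [0,∞) be C¹ with w(0) > 0, and let f : [0,T] → ℝ be continuous. Assume |∫₀ᵗ (1+s)^p f(s) ds| ≤ min{ 1/(4γ w(0)^γ), α/(2(p+1)) } (1+t)^{p+1} for all t ∈ [0,T]. If w satisfies w'(t) ≤ -2(1+t)^p w(t)^{1+γ} (α + f(t)) on [0,T], then w(t) ≤ w(0) [max{2, (p+1)/(αγ w(0)^γ)}]^{1/γ} · (1+t)^{-(p+1)/γ} for all t ∈ [0,T]. -/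
open Real Set intervalIntegral

set_option maxHeartbeats 1000000 in
theorem ode_decay_subsolution
    (p γ α T : ℝ) (hp : 0 ≤ p) (hγ : 0 < γ) (hα : 0 < α) (hT : 0 < T)
    (w w' : ℝ → ℝ) (f : ℝ → ℝ)
    (hw_nonneg : ∀ t ∈ Icc (0:ℝ) T, 0 ≤ w t)
    (hw_deriv : ∀ t ∈ Icc (0:ℝ) T, HasDerivAt w (w' t) t)
    (hw'_cont : ContinuousOn w' (Icc (0:ℝ) T))
    (hw0 : 0 < w 0)
    (hf_cont : ContinuousOn f (Icc (0:ℝ) T))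
    (hf_int : ∀ t ∈ Icc (0:ℝ) T,
      |∫ s in (0:ℝ)..t, (1 + s) ^ p * f s| ≤
        min (1 / (4 * γ * (w 0) ^ γ)) (α / (2 * (p + 1))) * (1 + t) ^ (p + 1))
    (hineq : ∀ t ∈ Icc (0:ℝ) T,
      w' t ≤ -2 * (1 + t) ^ p * (w t) ^ (1 + γ) * (α + f t)) :
    ∀ t ∈ Icc (0:ℝ) T,
      w t ≤ w 0 * (max 2 ((p + 1) / (α * γ * (w 0) ^ γ))) ^ (1 / γ) *
        (1 + t) ^ (-(p + 1) / γ) := by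
  have hp1 : 0 < p + 1 := by linarith
  have hw0γ : 0 < w 0 ^ γ := Real.rpow_pos_of_pos hw0 γ
  set K : ℝ := max 2 ((p + 1) / (α * γ * (w 0) ^ γ)) with hK
  have hK2 : (2:ℝ) ≤ K := le_max_left _ _
  have hKpos : 0 < K := by linarith
  have hK1γ : (0:ℝ) < K ^ (1/γ) := Real.rpow_pos_of_pos hKpos _
  -- continuity of w
  have hw_cont : ContinuousOn w (Icc (0:ℝ) T) := fun t ht =>
    (hw_deriv t ht).continuousAt.continuousWithinAt
  -- one-plus positivity
  have h1t : ∀ t ∈ Icc (0:ℝ) T, (0:ℝ) < 1 + t := fun t ht => by linarith [ht.1]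
  -- Step A: bound for the Gronwall argument
  obtain ⟨L, hL0, hLb⟩ : ∃ L, 0 ≤ L ∧ ∀ t ∈ Icc (0:ℝ) T,
      2 * (1 + t) ^ p * (w t) ^ γ * |α + f t| ≤ L := by
    have hcont : ContinuousOn (fun t => 2 * (1 + t) ^ p * (w t) ^ γ * |α + f t|)
        (Icc (0:ℝ) T) := by
      apply ContinuousOn.mul
      · apply ContinuousOn.mul
        · exact continuousOn_const.mul <|
            (continuousOn_const.add continuousOn_id).rpow_const
              (fun t ht => Or.inl (h1t t ht).ne')
        · exact hw_cont.rpow_const (fun t ht => Or.inr hγ.le)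
      · exact (continuousOn_const.add hf_cont).abs
    obtain ⟨C, hC⟩ := isCompact_Icc.exists_bound_of_continuousOn hcont
    exact ⟨max C 0, le_max_right _ _, fun t ht =>
      le_trans (le_abs_self _) (le_trans (hC t ht) (le_max_left _ _))⟩
  -- Step A: zeros propagate
  have hzero : ∀ s ∈ Icc (0:ℝ) T, ∀ t ∈ Icc (0:ℝ) T, s ≤ t → w s = 0 → w t = 0 := by
    intro s hs t ht hst hws
    set g : ℝ → ℝ := fun t => w t * Real.exp (-L * t) with hg
    have hgd : ∀ x ∈ Icc (0:ℝ) T,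
        HasDerivAt g (w' x * Real.exp (-L * x) + w x * (Real.exp (-L * x) * (-L))) x := by
      intro x hx
      have he := ((hasDerivAt_id x).const_mul (-L)).exp
      simp only [id_eq, mul_one] at he
      exact (hw_deriv x hx).mul he
    have hgd' : ∀ x ∈ Icc (0:ℝ) T,
        w' x * Real.exp (-L * x) + w x * (Real.exp (-L * x) * (-L)) ≤ 0 := by
      intro x hx
      have hwx : 0 ≤ w x := hw_nonneg x hx
      have h1 : w' x ≤ L * w x := by
        have h2 := hineq x hx
        have h3 : -2 * (1 + x) ^ p * (w x) ^ (1 + γ) * (α + f x) ≤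
            2 * (1 + x) ^ p * (w x) ^ (1 + γ) * |α + f x| := by
          have hpos : 0 ≤ 2 * (1 + x) ^ p * (w x) ^ (1 + γ) := by
            have := (h1t x hx).le
            positivity
          nlinarith [neg_abs_le (α + f x), abs_nonneg (α + f x)]
        have h4 : (w x) ^ (1 + γ) = (w x) ^ γ * w x := by
          rw [Real.rpow_add' hwx (by positivity), Real.rpow_one, mul_comm]
        have h5 := hLb x hx
        have h6 : 2 * (1 + x) ^ p * (w x) ^ (1 + γ) * |α + f x| ≤ L * w x := by
          rw [h4]
          calc 2 * (1 + x) ^ p * ((w x) ^ γ * w x) * |α + f x|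
              = (2 * (1 + x) ^ p * (w x) ^ γ * |α + f x|) * w x := by ring
            _ ≤ L * w x := mul_le_mul_of_nonneg_right h5 hwx
        linarith
      have hexp : 0 < Real.exp (-L * x) := Real.exp_pos _
      nlinarith
    have hganti : AntitoneOn g (Icc (0:ℝ) T) := by
      apply antitoneOn_of_deriv_nonpos (convex_Icc _ _)
      · exact fun x hx => ((hgd x hx).continuousAt.continuousWithinAt)
      · intro x hx
        have hx' : x ∈ Icc (0:ℝ) T := interior_subset hx
        exact ((hgd x hx').differentiableAt.differentiableWithinAt)
      · intro x hx
        have hx' : x ∈ Icc (0:ℝ) T := interior_subset hx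
        rw [(hgd x hx').deriv]
        exact hgd' x hx'
    have := hganti hs ht hst
    rw [hg] at this
    simp only [hws, zero_mul] at this
    have hwt := hw_nonneg t ht
    have hexp : 0 < Real.exp (-L * t) := Real.exp_pos _
    nlinarith
  -- Main argument
  intro t₁ ht₁
  have h1t₁ : (0:ℝ) < 1 + t₁ := h1t t₁ ht₁
  have hRHS_nonneg : 0 ≤ w 0 * K ^ (1/γ) * (1 + t₁) ^ (-(p + 1) / γ) := by positivity
  rcases (hw_nonneg t₁ ht₁).eq_or_lt' with hwt₁ | hwt₁
  · exact le_trans (le_of_eq hwt₁) hRHS_nonneg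
  -- positivity on [0, t₁]
  have hsub : Icc (0:ℝ) t₁ ⊆ Icc (0:ℝ) T := Icc_subset_Icc_right ht₁.2
  have hpos : ∀ s ∈ Icc (0:ℝ) t₁, 0 < w s := by
    intro s hs
    rcases (hw_nonneg s (hsub hs)).eq_or_lt' with h0 | h0
    · exact absurd (hzero s (hsub hs) t₁ ht₁ hs.2 h0) hwt₁.ne'
    · exact h0
  set v : ℝ → ℝ := fun t => w t ^ (-γ) with hv
  set V' : ℝ → ℝ := fun t => w' t * (-γ) * w t ^ (-γ - 1) with hV'
  have hvd : ∀ s ∈ Icc (0:ℝ) t₁, HasDerivAt v (V' s) s := by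
    intro s hs
    have := (hw_deriv s (hsub hs)).rpow_const (p := -γ) (Or.inl (hpos s hs).ne')
    simpa [hV'] using this
  have hV'cont : ContinuousOn V' (Icc (0:ℝ) t₁) := by
    apply ContinuousOn.mul
    · exact (hw'_cont.mono hsub).mul continuousOn_const
    · exact (hw_cont.mono hsub).rpow_const (fun s hs => Or.inl (hpos s hs).ne')
  have hV'int : IntervalIntegrable V' MeasureTheory.volume 0 t₁ := by
    apply ContinuousOn.intervalIntegrable
    rwa [uIcc_of_le ht₁.1]
  have hftc : ∫ s in (0:ℝ)..t₁, V' s = v t₁ - v 0 := by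
    apply integral_eq_sub_of_hasDerivAt
    · intro x hx
      rw [uIcc_of_le ht₁.1] at hx
      exact hvd x hx
    · exact hV'int
  -- lower bound function
  set G : ℝ → ℝ := fun s => 2 * γ * ((1 + s) ^ p * α + (1 + s) ^ p * f s) with hG
  have hGcont : ContinuousOn G (Icc (0:ℝ) t₁) := by
    have hbase : ContinuousOn (fun s : ℝ => (1 + s) ^ p) (Icc (0:ℝ) t₁) :=
      (continuousOn_const.add continuousOn_id).rpow_const
        (fun s hs => Or.inl (h1t s (hsub hs)).ne')
    exact continuousOn_const.mul ((hbase.mul continuousOn_const).add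
      (hbase.mul (hf_cont.mono hsub)))
  have hGint : IntervalIntegrable G MeasureTheory.volume 0 t₁ := by
    apply ContinuousOn.intervalIntegrable
    rwa [uIcc_of_le ht₁.1]
  -- pointwise bound G ≤ V'
  have hGle : ∀ s ∈ Icc (0:ℝ) t₁, G s ≤ V' s := by
    intro s hs
    have hws : 0 < w s := hpos s hs
    have h1s : (0:ℝ) < 1 + s := h1t s (hsub hs)
    have hw1 : (w s) ^ (1 + γ) * (w s) ^ (-γ - 1) = 1 := by
      rw [← Real.rpow_add hws, show (1 + γ) + (-γ - 1) = 0 by ring, Real.rpow_zero]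
    have hc : 0 < γ * w s ^ (-γ - 1) := by positivity
    have h2 := hineq s (hsub hs)
    have h3 : (-(γ * w s ^ (-γ - 1))) * (-2 * (1 + s) ^ p * (w s) ^ (1 + γ) * (α + f s))
        ≤ (-(γ * w s ^ (-γ - 1))) * w' s := by
      apply mul_le_mul_of_nonpos_left h2 (by linarith)
    have h4 : (-(γ * w s ^ (-γ - 1))) * (-2 * (1 + s) ^ p * (w s) ^ (1 + γ) * (α + f s))
        = G s := by
      simp only [hG]
      linear_combination (2 * γ * (1 + s) ^ p * (α + f s)) * hw1
    have h5 : (-(γ * w s ^ (-γ - 1))) * w' s = V' s := by simp only [hV']; ring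
    linarith [h3, h4.symm.le, h5.le]
  have hmono : ∫ s in (0:ℝ)..t₁, G s ≤ ∫ s in (0:ℝ)..t₁, V' s :=
    integral_mono_on ht₁.1 hGint hV'int hGle
  -- compute ∫ G
  set A : ℝ := (1 + t₁) ^ (p + 1) with hA
  have hA1 : (1:ℝ) ≤ A := Real.one_le_rpow (by linarith [ht₁.1]) (by linarith)
  have hApos : (0:ℝ) < A := by linarith
  set I : ℝ := ∫ s in (0:ℝ)..t₁, (1 + s) ^ p * f s with hI
  have hJ : ∫ s in (0:ℝ)..t₁, (1 + s) ^ p = (A - 1) / (p + 1) := by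
    have h1 : ∫ s in (0:ℝ)..t₁, (1 + s) ^ p = ∫ x in (1:ℝ)..(1 + t₁), x ^ p := by
      simpa using intervalIntegral.integral_comp_add_left (a := (0:ℝ)) (b := t₁)
        (fun x => x ^ p) 1
    rw [h1, integral_rpow (Or.inl (by linarith : (-1:ℝ) < p)), Real.one_rpow, hA]
  have hbase_int : IntervalIntegrable (fun s : ℝ => (1 + s) ^ p)
      MeasureTheory.volume 0 t₁ := by
    apply ContinuousOn.intervalIntegrable
    rw [uIcc_of_le ht₁.1]
    exact (continuousOn_const.add continuousOn_id).rpow_const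
      (fun s hs => Or.inl (h1t s (hsub hs)).ne')
  have hf_int' : IntervalIntegrable (fun s : ℝ => (1 + s) ^ p * f s)
      MeasureTheory.volume 0 t₁ := by
    apply ContinuousOn.intervalIntegrable
    rw [uIcc_of_le ht₁.1]
    exact ((continuousOn_const.add continuousOn_id).rpow_const
      (fun s hs => Or.inl (h1t s (hsub hs)).ne')).mul (hf_cont.mono hsub)
  have hGval : ∫ s in (0:ℝ)..t₁, G s = 2 * γ * (α * ((A - 1) / (p + 1)) + I) := by
    simp only [hG]
    rw [intervalIntegral.integral_const_mul, intervalIntegral.integral_add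
      (hbase_int.mul_const α) hf_int', intervalIntegral.integral_mul_const, hJ, hI]
    ring
  -- put things together
  set M : ℝ := min (1 / (4 * γ * (w 0) ^ γ)) (α / (2 * (p + 1))) with hM
  have hIlb : -(M * A) ≤ I := by
    have := hf_int t₁ ht₁
    rw [← hI, ← hA] at this
    linarith [(abs_le.mp this).1]
  set β : ℝ := 2 * γ * α / (p + 1) with hβ
  have hβpos : 0 < β := by positivity
  have hv0 : v 0 = (w 0 ^ γ)⁻¹ := by
    simp only [hv]
    rw [Real.rpow_neg hw0.le]
  have hv0pos : 0 < v 0 := by rw [hv0]; positivity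
  -- the key integral inequality
  have hkey : v 0 + β * (A - 1) - 2 * γ * (M * A) ≤ v t₁ := by
    have h1 : v t₁ - v 0 = ∫ s in (0:ℝ)..t₁, V' s := hftc.symm
    have h2 : 2 * γ * (α * ((A - 1) / (p + 1)) + I) ≤ v t₁ - v 0 := by
      rw [h1, ← hGval]; exact hmono
    have h3 : 2 * γ * I ≥ 2 * γ * (-(M * A)) := by
      apply mul_le_mul_of_nonneg_left hIlb (by positivity)
    have h4 : 2 * γ * (α * ((A - 1) / (p + 1))) = β * (A - 1) := by
      rw [hβ]; field_simp
    nlinarith [h2, h3, h4]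
  -- bounds on 2γM
  have hMv : 2 * γ * M ≤ v 0 / 2 := by
    have h1 : M ≤ 1 / (4 * γ * (w 0) ^ γ) := min_le_left _ _
    have h2 : 2 * γ * M ≤ 2 * γ * (1 / (4 * γ * (w 0) ^ γ)) :=
      mul_le_mul_of_nonneg_left h1 (by positivity)
    have h3 : 2 * γ * (1 / (4 * γ * (w 0) ^ γ)) = v 0 / 2 := by
      rw [hv0]; field_simp; ring
    linarith
  have hMβ : 2 * γ * M ≤ β / 2 := by
    have h1 : M ≤ α / (2 * (p + 1)) := min_le_right _ _
    have h2 : 2 * γ * M ≤ 2 * γ * (α / (2 * (p + 1))) :=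
      mul_le_mul_of_nonneg_left h1 (by positivity)
    have h3 : 2 * γ * (α / (2 * (p + 1))) = β / 2 := by
      rw [hβ]; field_simp
    linarith
  -- relation between v0/K and min(v0/2, β/2)
  set m : ℝ := v 0 / K with hm
  have hmpos : 0 < m := by positivity
  have hKβ : v 0 / ((p + 1) / (α * γ * (w 0) ^ γ)) = β / 2 := by
    rw [hv0, hβ]; field_simp
  have hm_le_v : m ≤ v 0 / 2 := by
    apply div_le_div_of_nonneg_left hv0pos.le (by norm_num) hK2
  have hm_le_β : m ≤ β / 2 := by
    have hK₂pos : 0 < (p + 1) / (α * γ * (w 0) ^ γ) := by positivity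
    have h1 : m ≤ v 0 / ((p + 1) / (α * γ * (w 0) ^ γ)) :=
      div_le_div_of_nonneg_left hv0pos.le hK₂pos (le_max_right _ _)
    linarith [hKβ ▸ h1]
  have hm_ge : min (v 0 / 2) (β / 2) ≤ m := by
    rcases max_choice 2 ((p + 1) / (α * γ * (w 0) ^ γ)) with h | h
    · rw [hm, ← hK] at *; rw [h]; exact min_le_left _ _
    · rw [hm, ← hK] at *
      rw [h, hKβ]
      exact min_le_right _ _
  -- conclude v t₁ ≥ m * A
  have hMm : 2 * γ * M ≤ m := le_trans (le_min hMv hMβ) hm_ge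
  have hfinal : m * A ≤ v t₁ := by
    have e1 : 2 * γ * (M * A) ≤ m * A := by
      nlinarith [mul_le_mul_of_nonneg_right hMm hApos.le]
    have h2mβ : 2 * m ≤ β := by linarith
    have h2mv : 2 * m ≤ v 0 := by linarith
    nlinarith [hkey, e1, mul_nonneg (sub_nonneg.2 h2mβ) (sub_nonneg.2 hA1)]
  -- translate back to w
  have hwt : w t₁ ≤ (m * A) ^ (-(1/γ)) := by
    have hvt : v t₁ = w t₁ ^ (-γ) := rfl
    have h1 : (v t₁) ^ (-(1/γ)) ≤ (m * A) ^ (-(1/γ)) :=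
      Real.rpow_le_rpow_of_nonpos (by positivity) hfinal (neg_nonpos.mpr (by positivity))
    have h2 : (v t₁) ^ (-(1/γ)) = w t₁ := by
      rw [hvt, ← Real.rpow_mul hwt₁.le]
      rw [show (-γ) * (-(1/γ)) = 1 by field_simp, Real.rpow_one]
    linarith [h2 ▸ h1]
  have heq : (m * A) ^ (-(1/γ)) = w 0 * K ^ (1/γ) * (1 + t₁) ^ (-(p + 1) / γ) := by
    have hmeq : m ^ (-(1/γ)) = w 0 * K ^ (1/γ) := by
      have hminv : m⁻¹ = w 0 ^ γ * K := by
        rw [hm, hv0]; field_simp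
      rw [Real.rpow_neg hmpos.le, ← Real.inv_rpow hmpos.le, hminv,
        Real.mul_rpow hw0γ.le hKpos.le, ← Real.rpow_mul hw0.le,
        mul_one_div_cancel hγ.ne', Real.rpow_one]
    have hAeq : A ^ (-(1/γ)) = (1 + t₁) ^ (-(p + 1) / γ) := by
      rw [hA, ← Real.rpow_mul h1t₁.le]
      congr 1
      field_simp
    rw [Real.mul_rpow hmpos.le hApos.le, hmeq, hAeq]
  rw [← heq]
  exact hwt
end

section
/- Let p ≥ 0, γ > 0, α > 0, T > 0, let w : [0,T] → [0,∞) be C¹ with w(0) > 0, and let f : [0,T] → ℝ be continuous. Assume |∫₀ᵗ (1+s)^p f(s) ds| ≤ min{ 1/(4γ w(0)^γ), α/(2(p+1)) } (1+t)^{p+1} for all t ∈ [0,T]. If w satisfies w'(t) ≥ -2(1+t)^p w(t)^{1+γ} (α + f(t)) on [0,T], then w(t) ≥ w(0) [1 + 3αγ w(0)^γ/(p+1)]^{-1/γ} · (1+t)^{-(p+1)/γ} for all t ∈ [0,T]. -/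
open Real Set intervalIntegral

theorem ode_decay_supersolution
    (p γ α T : ℝ) (hp : 0 ≤ p) (hγ : 0 < γ) (hα : 0 < α) (hT : 0 < T)
    (w w' : ℝ → ℝ) (f : ℝ → ℝ)
    (hw_nonneg : ∀ t ∈ Icc (0:ℝ) T, 0 ≤ w t)
    (hw_deriv : ∀ t ∈ Icc (0:ℝ) T, HasDerivAt w (w' t) t)
    (hw'_cont : ContinuousOn w' (Icc (0:ℝ) T))
    (hw0 : 0 < w 0)
    (hf_cont : ContinuousOn f (Icc (0:ℝ) T))
    (hf_int : ∀ t ∈ Icc (0:ℝ) T,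
      |∫ s in (0:ℝ)..t, (1 + s) ^ p * f s| ≤
        min (1 / (4 * γ * (w 0) ^ γ)) (α / (2 * (p + 1))) * (1 + t) ^ (p + 1))
    (hineq : ∀ t ∈ Icc (0:ℝ) T,
      w' t ≥ -2 * (1 + t) ^ p * (w t) ^ (1 + γ) * (α + f t)) :
    ∀ t ∈ Icc (0:ℝ) T,
      w t ≥ w 0 * (1 + 3 * α * γ * (w 0) ^ γ / (p + 1)) ^ (-(1 / γ)) *
        (1 + t) ^ (-(p + 1) / γ) := by
  have hγ0 : γ ≠ 0 := hγ.ne'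
  have hp1 : (0:ℝ) < p + 1 := by linarith
  have hw0γ : (0:ℝ) < w 0 ^ γ := rpow_pos_of_pos hw0 γ
  set C : ℝ := 1 + 3 * α * γ * w 0 ^ γ / (p + 1) with hC
  have hCpos : 0 < C := by
    have : 0 < 3 * α * γ * w 0 ^ γ / (p + 1) := by positivity
    simp only [hC]; linarith
  have hw_cont : ContinuousOn w (Icc (0:ℝ) T) := fun t ht =>
    ((hw_deriv t ht).continuousAt).continuousWithinAt
  -- Key integral estimate on intervals where w is positive
  have key : ∀ t ∈ Icc (0:ℝ) T, (∀ s ∈ Icc (0:ℝ) t, 0 < w s) →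
      w t ^ (-γ) ≤ w 0 ^ (-γ) * C * (1 + t) ^ (p + 1) := by
    intro t ht hpos
    have ht0 : (0:ℝ) ≤ t := ht.1
    have hsub : Icc (0:ℝ) t ⊆ Icc (0:ℝ) T := Icc_subset_Icc le_rfl ht.2
    set v' : ℝ → ℝ := fun s => w' s * (-γ) * w s ^ (-γ - 1) with hv'def
    have hv : ∀ s ∈ Icc (0:ℝ) t, HasDerivAt (fun u => w u ^ (-γ)) (v' s) s := by
      intro s hs
      exact (hw_deriv s (hsub hs)).rpow_const (p := -γ) (Or.inl (hpos s hs).ne')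
    have hv'c : ContinuousOn v' (Icc (0:ℝ) t) := by
      exact ((hw'_cont.mono hsub).mul continuousOn_const).mul
        ((hw_cont.mono hsub).rpow_const fun s hs => Or.inl (hpos s hs).ne')
    have hint : IntervalIntegrable v' MeasureTheory.volume 0 t := by
      apply ContinuousOn.intervalIntegrable
      rwa [uIcc_of_le ht0]
    have hftc : ∫ s in (0:ℝ)..t, v' s = w t ^ (-γ) - w 0 ^ (-γ) := by
      apply intervalIntegral.integral_eq_sub_of_hasDerivAt
      · intro s hs
        rw [uIcc_of_le ht0] at hs
        exact hv s hs
      · exact hint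
    set g : ℝ → ℝ := fun s => 2 * γ * α * (1 + s) ^ p + 2 * γ * ((1 + s) ^ p * f s)
      with hgdef
    have hbase : ContinuousOn (fun s : ℝ => (1 + s) ^ p) (Icc (0:ℝ) t) := by
      apply ContinuousOn.rpow_const (by fun_prop)
      intro s hs
      exact Or.inl (by nlinarith [hs.1])
    have hi1 : IntervalIntegrable (fun s : ℝ => (1 + s) ^ p) MeasureTheory.volume 0 t := by
      apply ContinuousOn.intervalIntegrable
      rwa [uIcc_of_le ht0]
    have hi2 : IntervalIntegrable (fun s : ℝ => (1 + s) ^ p * f s) MeasureTheory.volume 0 t := by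
      apply ContinuousOn.intervalIntegrable
      rw [uIcc_of_le ht0]
      exact hbase.mul (hf_cont.mono hsub)
    have hgint : IntervalIntegrable g MeasureTheory.volume 0 t :=
      (hi1.const_mul _).add (hi2.const_mul _)
    have hmono : ∀ s ∈ Icc (0:ℝ) t, v' s ≤ g s := by
      intro s hs
      have hws := hpos s hs
      have hA := hineq s (hsub hs)
      have h1 : w s ^ (1 + γ) * w s ^ (-γ - 1) = 1 := by
        rw [← Real.rpow_add hws, show 1 + γ + (-γ - 1) = 0 by ring, Real.rpow_zero]
      have hXneg : (-γ) * w s ^ (-γ - 1) ≤ 0 := by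
        have : (0:ℝ) < w s ^ (-γ - 1) := rpow_pos_of_pos hws _
        nlinarith
      have h2 : w' s * ((-γ) * w s ^ (-γ - 1)) ≤
          (-2 * (1 + s) ^ p * w s ^ (1 + γ) * (α + f s)) * ((-γ) * w s ^ (-γ - 1)) :=
        mul_le_mul_of_nonpos_right hA hXneg
      have h3 : (-2 * (1 + s) ^ p * w s ^ (1 + γ) * (α + f s)) * ((-γ) * w s ^ (-γ - 1))
          = g s := by
        simp only [hgdef]
        linear_combination (2 * γ * (1 + s) ^ p * (α + f s)) * h1
      calc v' s = w' s * ((-γ) * w s ^ (-γ - 1)) := by simp only [hv'def]; ring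
        _ ≤ _ := h2
        _ = g s := h3
    have hint_le : ∫ s in (0:ℝ)..t, v' s ≤ ∫ s in (0:ℝ)..t, g s :=
      intervalIntegral.integral_mono_on ht0 hint hgint hmono
    have hgsplit : ∫ s in (0:ℝ)..t, g s
        = (2 * γ * α * ∫ s in (0:ℝ)..t, (1 + s) ^ p)
          + 2 * γ * ∫ s in (0:ℝ)..t, (1 + s) ^ p * f s := by
      simp only [hgdef]
      rw [intervalIntegral.integral_add (hi1.const_mul _) (hi2.const_mul _),
        intervalIntegral.integral_const_mul, intervalIntegral.integral_const_mul]
    have hI1 : ∫ s in (0:ℝ)..t, (1 + s) ^ p = ((1 + t) ^ (p + 1) - 1) / (p + 1) := by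
      have hder : ∀ s ∈ uIcc (0:ℝ) t,
          HasDerivAt (fun u : ℝ => (1 + u) ^ (p + 1) / (p + 1)) ((1 + s) ^ p) s := by
        intro s _
        have h1 : HasDerivAt (fun u : ℝ => 1 + u) 1 s := by
          simpa using (hasDerivAt_id s).const_add 1
        have h2 := (h1.rpow_const (p := p + 1) (Or.inr (by linarith))).div_const (p + 1)
        have he : p + 1 - 1 = p := by ring
        rw [he] at h2
        convert h2 using 1
        case e'_9 => rw [eq_div_iff hp1.ne']; ring
        all_goals rfl
      rw [intervalIntegral.integral_eq_sub_of_hasDerivAt hder hi1]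
      norm_num
      ring
    have hI2 : ∫ s in (0:ℝ)..t, (1 + s) ^ p * f s ≤ α / (2 * (p + 1)) * (1 + t) ^ (p + 1) := by
      have h := hf_int t ht
      have h2 : min (1 / (4 * γ * w 0 ^ γ)) (α / (2 * (p + 1))) * (1 + t) ^ (p + 1)
          ≤ α / (2 * (p + 1)) * (1 + t) ^ (p + 1) :=
        mul_le_mul_of_nonneg_right (min_le_right _ _) (rpow_nonneg (by linarith) _)
      exact le_trans (le_trans (le_abs_self _) h) h2
    set X := (1 + t) ^ (p + 1) with hXdef
    have hX1 : (1:ℝ) ≤ X := by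
      have := Real.rpow_le_rpow (le_of_lt one_pos) (by linarith : (1:ℝ) ≤ 1 + t)
        (by linarith : (0:ℝ) ≤ p + 1)
      simpa using this
    have hmain : w t ^ (-γ) - w 0 ^ (-γ)
        ≤ 2 * γ * α * ((X - 1) / (p + 1)) + 2 * γ * (α / (2 * (p + 1)) * X) := by
      rw [← hftc]
      refine hint_le.trans ?_
      rw [hgsplit, hI1]
      have h2 : 2 * γ * ∫ s in (0:ℝ)..t, (1 + s) ^ p * f s
          ≤ 2 * γ * (α / (2 * (p + 1)) * X) :=
        mul_le_mul_of_nonneg_left hI2 (by linarith)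
      linarith
    have hinv : w 0 ^ (-γ) * w 0 ^ γ = 1 := by
      rw [← Real.rpow_add hw0, show -γ + γ = 0 by ring, Real.rpow_zero]
    have hw0γ' : (0:ℝ) < w 0 ^ (-γ) := rpow_pos_of_pos hw0 _
    simp only [hC]
    have hexpand : w 0 ^ (-γ) * (1 + 3 * α * γ * w 0 ^ γ / (p + 1)) * X
        = w 0 ^ (-γ) * X + 3 * α * γ / (p + 1) * X := by
      linear_combination (3 * α * γ / (p + 1) * X) * hinv
    have hsum : 2 * γ * α * ((X - 1) / (p + 1)) + 2 * γ * (α / (2 * (p + 1)) * X)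
        = γ * α * (3 * X - 2) / (p + 1) := by
      field_simp
      ring
    have d1 : 3 * α * γ / (p + 1) * X - γ * α * (3 * X - 2) / (p + 1)
        = 2 * γ * α / (p + 1) := by
      field_simp
      ring
    have d2 : w 0 ^ (-γ) * 1 ≤ w 0 ^ (-γ) * X := mul_le_mul_of_nonneg_left hX1 hw0γ'.le
    rw [mul_one] at d2
    have d3 : (0:ℝ) < 2 * γ * α / (p + 1) := by positivity
    linarith
  -- Inversion step
  have inv_step : ∀ b : ℝ, 0 < w b → ∀ u : ℝ, 0 ≤ u →
      w b ^ (-γ) ≤ w 0 ^ (-γ) * C * (1 + u) ^ (p + 1) →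
      w 0 * C ^ (-(1 / γ)) * (1 + u) ^ (-(p + 1) / γ) ≤ w b := by
    intro b hwb u hu hle
    have h1u : (0:ℝ) < 1 + u := by linarith
    have hexp : (-γ) * (-(1 / γ)) = 1 := by field_simp
    have h2 : (w 0 ^ (-γ) * C * (1 + u) ^ (p + 1)) ^ (-(1 / γ))
        ≤ (w b ^ (-γ)) ^ (-(1 / γ)) := by
      apply Real.rpow_le_rpow_of_nonpos (rpow_pos_of_pos hwb _) hle
      have : 0 < 1 / γ := by positivity
      linarith
    have h3 : (w b ^ (-γ)) ^ (-(1 / γ)) = w b := by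
      rw [← Real.rpow_mul hwb.le, hexp, Real.rpow_one]
    have h4 : (w 0 ^ (-γ) * C * (1 + u) ^ (p + 1)) ^ (-(1 / γ))
        = w 0 * C ^ (-(1 / γ)) * (1 + u) ^ (-(p + 1) / γ) := by
      rw [Real.mul_rpow (by positivity) (by positivity),
        Real.mul_rpow (by positivity) hCpos.le,
        ← Real.rpow_mul hw0.le, ← Real.rpow_mul h1u.le, hexp, Real.rpow_one,
        show (p + 1) * (-(1 / γ)) = -(p + 1) / γ by ring]
    rw [← h3]
    rw [← h4]
    exact h2
  -- Positivity of w on [0, T]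
  have hwpos : ∀ t ∈ Icc (0:ℝ) T, 0 < w t := by
    by_contra h
    push_neg at h
    obtain ⟨t₁, ht₁, hwt₁⟩ := h
    set Z : Set ℝ := Icc (0:ℝ) T ∩ w ⁻¹' (Iic 0) with hZdef
    have hZne : Z.Nonempty := ⟨t₁, ht₁, hwt₁⟩
    have hZclosed : IsClosed Z :=
      hw_cont.preimage_isClosed_of_isClosed isClosed_Icc isClosed_Iic
    have hbdd : BddBelow Z := ⟨0, fun z hz => hz.1.1⟩
    set t₀ := sInf Z with ht₀def
    have ht₀Z : t₀ ∈ Z := hZclosed.csInf_mem hZne hbdd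
    have ht₀T : t₀ ∈ Icc (0:ℝ) T := ht₀Z.1
    have hwt₀ : w t₀ ≤ 0 := ht₀Z.2
    have ht₀pos : 0 < t₀ := by
      rcases eq_or_lt_of_le ht₀T.1 with h0 | h0
      · exfalso; rw [← h0] at hwt₀; linarith
      · exact h0
    have hposlt : ∀ s ∈ Ico (0:ℝ) t₀, 0 < w s := by
      intro s hs
      rcases lt_or_ge 0 (w s) with h | h
      · exact h
      · exact absurd (csInf_le hbdd ⟨⟨hs.1, hs.2.le.trans ht₀T.2⟩, h⟩) (not_le.2 hs.2)
    have hb : ∀ b ∈ Ico (0:ℝ) t₀,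
        w 0 * C ^ (-(1 / γ)) * (1 + t₀) ^ (-(p + 1) / γ) ≤ w b := by
      intro b hbmem
      have hbT : b ∈ Icc (0:ℝ) T := ⟨hbmem.1, hbmem.2.le.trans ht₀T.2⟩
      have hkey := key b hbT (fun s hs => hposlt s ⟨hs.1, lt_of_le_of_lt hs.2 hbmem.2⟩)
      have hmonot : (1 + b) ^ (p + 1) ≤ (1 + t₀) ^ (p + 1) :=
        Real.rpow_le_rpow (by linarith [hbmem.1]) (by linarith [hbmem.2.le]) (by linarith)
      have hkey2 : w b ^ (-γ) ≤ w 0 ^ (-γ) * C * (1 + t₀) ^ (p + 1) := by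
        refine hkey.trans ?_
        apply mul_le_mul_of_nonneg_left hmonot
        positivity
      exact inv_step b (hposlt b hbmem) t₀ ht₀pos.le hkey2
    have hlim : w 0 * C ^ (-(1 / γ)) * (1 + t₀) ^ (-(p + 1) / γ) ≤ w t₀ := by
      have hc : ContinuousAt w t₀ := (hw_deriv t₀ ht₀T).continuousAt
      haveI hne : (nhdsWithin t₀ (Iio t₀)).NeBot :=
        nhdsWithin_Iio_self_neBot' ⟨0, ht₀pos⟩
      refine ge_of_tendsto (hc.tendsto.mono_left (nhdsWithin_le_nhds (s := Iio t₀))) ?_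
      filter_upwards [Ico_mem_nhdsLT ht₀pos] with b hbmem
      exact hb b hbmem
    have : (0:ℝ) < w 0 * C ^ (-(1 / γ)) * (1 + t₀) ^ (-(p + 1) / γ) := by
      have : (0:ℝ) < 1 + t₀ := by linarith
      positivity
    linarith
  -- Conclusion
  intro t ht
  have hkey := key t ht (fun s hs => hwpos s (Icc_subset_Icc le_rfl ht.2 hs))
  exact inv_step t (hwpos t ht) t ht.1 hkey
end
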